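/- arXiv:2105.05570 — 2 statements merged into one kernel-verified Lean document; each statement's English description precedes it below -/
import Mathlib

section
/- The second moment of cos θ against the p-adic Plancherel measure equals (1/4)(1 + 1/p): for every prime p, ∫₀^π (cos θ)² dμ_p(θ) = (1/4)(1 + 1/p). -/
open MeasureTheory

/-- The second moment of `cos θ` against the p-adic Plancherel measure equals `(1/4)(1+1/p)`. -/
theorem plancherel_second_moment_cos (p : ℕ) (hp : p.Prime) :
    ∫ θ in (0:ℝ)..Real.pi,
        Real.cos θ ^ 2 *
          ((1 + 1 / (p : ℝ)) * (1 - 2 * Real.cos (2 * θ) / p + 1 / (p : ℝ) ^ 2)⁻¹ *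
            ((2 / Real.pi) * Real.sin θ ^ 2)) = (1 / 4) * (1 + 1 / (p : ℝ)) := by
  set P : ℝ := (p : ℝ) with hPdef
  have hP : (2:ℝ) ≤ P := by rw [hPdef]; exact_mod_cast hp.two_le
  have hP0 : P ≠ 0 := by positivity
  have hπ : Real.pi ≠ 0 := Real.pi_ne_zero
  -- key denominator bounds
  have hM : ∀ θ : ℝ, P - Real.cos (2*θ) > 0 := fun θ => by
    have := Real.cos_le_one (2*θ); linarith
  have hE : ∀ θ : ℝ, P^2 - 2*P*Real.cos (2*θ) + 1 > 0 := fun θ => by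
    have h1 := Real.cos_le_one (2*θ); nlinarith
  have hD : ∀ θ : ℝ, (1 - 2 * Real.cos (2 * θ) / P + 1 / P ^ 2) ≠ 0 := fun θ => by
    have := hE θ
    have h2 : (1 - 2 * Real.cos (2 * θ) / P + 1 / P ^ 2)
        = (P^2 - 2*P*Real.cos (2*θ) + 1) / P^2 := by field_simp
    rw [h2]
    positivity
  -- the antiderivative
  set F : ℝ → ℝ := fun θ =>
    (1 + 1/P) * (2/Real.pi) *
      ( -(P/4) * (θ/2 - Real.sin (2*θ)/4) + ((P+1)^2/16) * θ
        - ((P^2-1)/16) * (θ + Real.arctan (Real.sin (2*θ) / (P - Real.cos (2*θ)))) ) with hF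
  have hderiv : ∀ θ ∈ Set.uIcc (0:ℝ) Real.pi,
      HasDerivAt F
        (Real.cos θ ^ 2 *
          ((1 + 1 / P) * (1 - 2 * Real.cos (2 * θ) / P + 1 / P ^ 2)⁻¹ *
            ((2 / Real.pi) * Real.sin θ ^ 2))) θ := by
    intro θ _
    have h2θ : HasDerivAt (fun θ : ℝ => 2*θ) 2 θ := by
      simpa using (hasDerivAt_id θ).const_mul (2:ℝ)
    have hsin : HasDerivAt (fun θ : ℝ => Real.sin (2*θ)) (2 * Real.cos (2*θ)) θ := by
      simpa [Function.comp_def, mul_comm] using (Real.hasDerivAt_sin (2*θ)).comp θ h2θ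
    have hcos : HasDerivAt (fun θ : ℝ => P - Real.cos (2*θ)) (2 * Real.sin (2*θ)) θ := by
      have h : HasDerivAt (fun θ : ℝ => Real.cos (2*θ)) (-Real.sin (2*θ) * 2) θ := by
        simpa [Function.comp_def] using (Real.hasDerivAt_cos (2*θ)).comp θ h2θ
      simpa [mul_comm] using h.const_sub P
    have hMθ := hM θ
    have hEθ := hE θ
    have hquot : HasDerivAt (fun θ : ℝ => Real.sin (2*θ) / (P - Real.cos (2*θ)))
        ((2 * Real.cos (2*θ) * (P - Real.cos (2*θ)) - Real.sin (2*θ) * (2 * Real.sin (2*θ)))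
          / (P - Real.cos (2*θ))^2) θ :=
      hsin.div hcos (ne_of_gt hMθ)
    -- derivative of θ + arctan(...), in simplified closed form
    have hsum : HasDerivAt
        (fun θ : ℝ => θ + Real.arctan (Real.sin (2*θ) / (P - Real.cos (2*θ))))
        ((P^2 - 1) / (P^2 - 2*P*Real.cos (2*θ) + 1)) θ := by
      have h := (hasDerivAt_id θ).add hquot.arctan
      refine h.congr_deriv ?_; symm
      have hsq : Real.sin (2*θ)^2 = 1 - Real.cos (2*θ)^2 := Real.sin_sq (2*θ)
      have e1 : Real.sin (2*θ) * (2 * Real.sin (2*θ)) = 2*(1 - Real.cos (2*θ)^2) := by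
        rw [← hsq]; ring
      rw [e1, div_pow, hsq]
      have hM0 : P - Real.cos (2*θ) ≠ 0 := ne_of_gt hMθ
      have hE0 : P^2 - 2*P*Real.cos (2*θ) + 1 ≠ 0 := ne_of_gt hEθ
      have hA0 : (P - Real.cos (2*θ))^2 + (1 - Real.cos (2*θ)^2) ≠ 0 := by
        have : (P - Real.cos (2*θ))^2 + (1 - Real.cos (2*θ)^2)
            = P^2 - 2*P*Real.cos (2*θ) + 1 := by ring
        rw [this]; exact hE0
      have hE3 : P * (P - 2 * Real.cos (2 * θ)) + 1 ≠ 0 := by intro h0; apply hE0; linear_combination h0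
      field_simp
      ring
    have hlin : HasDerivAt (fun θ : ℝ => -(P/4) * (θ/2 - Real.sin (2*θ)/4) + ((P+1)^2/16) * θ)
        (-(P/4) * (1/2 - 2 * Real.cos (2*θ)/4) + (P+1)^2/16) θ := by
      have h1 : HasDerivAt (fun θ : ℝ => θ/2 - Real.sin (2*θ)/4)
          (1/2 - 2 * Real.cos (2*θ)/4) θ := by
        exact (((hasDerivAt_id θ).div_const 2).sub (hsin.div_const 4)).congr_deriv (by ring)
      exact ((h1.const_mul (-(P/4))).add ((hasDerivAt_id θ).const_mul ((P+1)^2/16))).congr_deriv (by ring)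
    have htot := ((hlin.sub (hsum.const_mul ((P^2-1)/16))).const_mul ((1 + 1/P) * (2/Real.pi)))
    refine htot.congr_deriv ?_; symm
    have hc : Real.cos θ ^ 2 = 1/2 + Real.cos (2*θ)/2 := Real.cos_sq θ
    have hs : Real.sin θ ^ 2 = 1/2 - Real.cos (2*θ)/2 := Real.sin_sq_eq_half_sub θ
    have hEθ' : P^2 - 2*P*Real.cos (2*θ) + 1 ≠ 0 := ne_of_gt hEθ
    have hDrw : (1 - 2 * Real.cos (2 * θ) / P + 1 / P ^ 2)⁻¹
        = P^2 / (P^2 - 2*P*Real.cos (2*θ) + 1) := by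
      have h2 : (1 - 2 * Real.cos (2 * θ) / P + 1 / P ^ 2)
          = (P^2 - 2*P*Real.cos (2*θ) + 1) / P^2 := by field_simp
      rw [h2, inv_div]
    rw [hc, hs, hDrw]
    have hE3 : P * (P - 2 * Real.cos (2 * θ)) + 1 ≠ 0 := by intro h0; apply hEθ'; linear_combination h0
    field_simp
    ring
  have hcont : Continuous (fun θ : ℝ =>
      Real.cos θ ^ 2 *
        ((1 + 1 / P) * (1 - 2 * Real.cos (2 * θ) / P + 1 / P ^ 2)⁻¹ *
          ((2 / Real.pi) * Real.sin θ ^ 2))) := by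
    have hd : Continuous (fun θ : ℝ => (1 - 2 * Real.cos (2 * θ) / P + 1 / P ^ 2)) := by
      have hc2 : Continuous (fun θ : ℝ => Real.cos (2 * θ)) :=
        Real.continuous_cos.comp (continuous_const.mul continuous_id)
      exact (continuous_const.sub ((continuous_const.mul hc2).div_const P)).add continuous_const
    exact (Real.continuous_cos.pow 2).mul
      ((continuous_const.mul (hd.inv₀ hD)).mul
        (continuous_const.mul (Real.continuous_sin.pow 2)))
  rw [intervalIntegral.integral_eq_sub_of_hasDerivAt hderiv
    (hcont.intervalIntegrable 0 Real.pi)]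
  have hsinπ : Real.sin (2*Real.pi) = 0 := by
    simpa using Real.sin_nat_mul_pi 2
  have hcosπ : Real.cos (2*Real.pi) = 1 := by
    simpa using Real.cos_nat_mul_two_pi 1
  simp only [hF]
  rw [hsinπ, hcosπ]
  norm_num
  field_simp
  ring
end

section
/- The difference bound for G_p: for z = u + iv with u > 0, |G_p(z) − G(z)| ≤ C p^{-1} G(u) for an absolute constant C and every prime p, where G_p and G are the exponential integrals against the p-adic Plancherel and Sato–Tate measures respectively. -/
open MeasureTheory Complex

/-- `G_p(z) = ∫₀^π exp(2z cos θ) dμ_p(θ)`, the integral against the p-adic Plancherel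
measure. -/
noncomputable def Gp (p : ℕ) (z : ℂ) : ℂ :=
  ∫ θ in (0:ℝ)..Real.pi,
    Complex.exp (2 * z * (Real.cos θ : ℂ)) *
      (((1 + 1 / (p : ℝ)) * (1 - 2 * Real.cos (2 * θ) / p + 1 / (p : ℝ) ^ 2)⁻¹ *
        ((2 / Real.pi) * Real.sin θ ^ 2) : ℝ) : ℂ)

/-- `G(z) = ∫₀^π exp(2z cos θ) dμ_∞(θ)`, the integral against the Sato–Tate measure. -/
noncomputable def G (z : ℂ) : ℂ :=
  ∫ θ in (0:ℝ)..Real.pi,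
    Complex.exp (2 * z * (Real.cos θ : ℂ)) * (((2 / Real.pi) * Real.sin θ ^ 2 : ℝ) : ℂ)

/-- Real-valued `G(u) = ∫₀^π exp(2u cos θ) dμ_∞(θ)` for real `u`. -/
noncomputable def Greal (u : ℝ) : ℝ :=
  ∫ θ in (0:ℝ)..Real.pi, Real.exp (2 * u * Real.cos θ) * ((2 / Real.pi) * Real.sin θ ^ 2)

lemma denom_pos {p : ℝ} (hp : 2 ≤ p) (θ : ℝ) :
    (1/4 : ℝ) ≤ 1 - 2 * Real.cos (2 * θ) / p + 1 / p ^ 2 := by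
  have hp0 : (0:ℝ) < p := by linarith
  have hq0 : (0:ℝ) < 1/p := by positivity
  have hq2 : 1/p ≤ 1/2 := by rw [div_le_div_iff₀ hp0 (by norm_num : (0:ℝ) < 2)]; linarith
  have hc : Real.cos (2*θ) ≤ 1 := Real.cos_le_one _
  have e1 : 2 * Real.cos (2*θ) / p = 2 * (Real.cos (2*θ) * (1/p)) := by ring
  have e2 : 1/p^2 = (1/p)^2 := by ring
  rw [e1, e2]
  nlinarith [sq_nonneg (1/2 - 1/p), mul_le_mul_of_nonneg_right hc hq0.le]

lemma ratio_bound {p : ℝ} (hp : 2 ≤ p) (θ : ℝ) :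
    |(1 + 1/p) * (1 - 2 * Real.cos (2 * θ) / p + 1 / p ^ 2)⁻¹ - 1| ≤ 16 / p := by
  have hp0 : (0:ℝ) < p := by linarith
  set D := 1 - 2 * Real.cos (2 * θ) / p + 1 / p ^ 2 with hD
  have hD14 : (1/4:ℝ) ≤ D := denom_pos hp θ
  have hD0 : 0 < D := lt_of_lt_of_le (by norm_num) hD14
  have key : (1 + 1/p) * D⁻¹ - 1 = ((1 + 1/p) - D) / D := by
    field_simp
  rw [key, abs_div, abs_of_pos hD0]
  have hnum : |(1 + 1/p) - D| ≤ 4 / p := by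
    have hc1 : |Real.cos (2*θ)| ≤ 1 := Real.abs_cos_le_one _
    have : (1 + 1/p) - D = 1/p + 2 * Real.cos (2*θ) / p - 1/p^2 := by
      rw [hD]; ring
    rw [this]
    have h2 : |2 * Real.cos (2*θ) / p| ≤ 2 / p := by
      rw [abs_div, abs_of_pos hp0]
      gcongr
      rw [abs_mul]
      have h22 : |(2:ℝ)| = 2 := by norm_num
      rw [h22]; nlinarith
    have h3 : |1/p^2| ≤ 1/p := by
      rw [abs_of_pos (by positivity)]
      rw [div_le_div_iff₀ (by positivity) hp0]
      nlinarith
    have h1 : |1/p| = 1/p := abs_of_pos (by positivity)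
    calc |1/p + 2 * Real.cos (2*θ) / p - 1/p^2|
        ≤ |1/p| + |2 * Real.cos (2*θ) / p| + |1/p^2| := by
          apply (abs_sub _ _).trans; gcongr; exact abs_add_le _ _
      _ ≤ 4 / p := by
          have e2 : (2:ℝ)/p = 2*(1/p) := by ring
          have e4 : (4:ℝ)/p = 4*(1/p) := by ring
          have e3 : (1:ℝ)/p^2 ≥ 0 := by positivity
          rw [h1, e4]; rw [e2] at h2; linarith
  calc |(1 + 1/p) - D| / D ≤ (4/p) / (1/4) := by
        apply div_le_div₀ (by positivity) hnum (by norm_num) hD14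
    _ = 16 / p := by field_simp; ring
  
/-- Difference bound: for `z = u + iv` with `u > 0`,
`|G_p(z) − G(z)| ≤ C p⁻¹ G(u)` for an absolute constant `C` and every prime `p`. -/
theorem Gp_sub_G_bound : ∃ C : ℝ, 0 < C ∧ ∀ (p : ℕ), p.Prime → ∀ u v : ℝ, 0 < u →
    ‖Gp p (u + v * Complex.I) - G (u + v * Complex.I)‖ ≤ C * (p : ℝ)⁻¹ * Greal u := by
  refine ⟨16, by norm_num, ?_⟩
  intro p hp u v hu
  set z : ℂ := (u:ℂ) + v * Complex.I with hz
  have hp2 : (2:ℝ) ≤ (p:ℝ) := by exact_mod_cast hp.two_le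
  have hp0 : (0:ℝ) < (p:ℝ) := by linarith
  have hecont : Continuous fun θ : ℝ => Complex.exp (2 * z * (Real.cos θ : ℂ)) :=
    Complex.continuous_exp.comp
      (continuous_const.mul (Complex.continuous_ofReal.comp Real.continuous_cos))
  have hwcont : Continuous fun θ : ℝ => (2 / Real.pi) * Real.sin θ ^ 2 :=
    continuous_const.mul (Real.continuous_sin.pow 2)
  have hDcont : Continuous fun θ : ℝ =>
      (1 - 2 * Real.cos (2 * θ) / (p:ℝ) + 1 / (p:ℝ) ^ 2)⁻¹ := by
    apply Continuous.inv₀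
    · exact (continuous_const.sub ((continuous_const.mul (Real.continuous_cos.comp
        (continuous_const.mul continuous_id))).div_const _)).add continuous_const
    · intro θ
      have h := denom_pos hp2 θ
      intro hcon; rw [hcon] at h; norm_num at h
  have hA : Continuous fun θ : ℝ =>
      Complex.exp (2 * z * (Real.cos θ : ℂ)) *
        (((1 + 1 / (p : ℝ)) * (1 - 2 * Real.cos (2 * θ) / p + 1 / (p : ℝ) ^ 2)⁻¹ *
          ((2 / Real.pi) * Real.sin θ ^ 2) : ℝ) : ℂ) :=
    hecont.mul (Complex.continuous_ofReal.comp
      (((continuous_const.mul hDcont).mul hwcont)))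
  have hB : Continuous fun θ : ℝ =>
      Complex.exp (2 * z * (Real.cos θ : ℂ)) * (((2 / Real.pi) * Real.sin θ ^ 2 : ℝ) : ℂ) :=
    hecont.mul (Complex.continuous_ofReal.comp hwcont)
  have hIA : IntervalIntegrable _ MeasureTheory.volume (0:ℝ) Real.pi :=
    hA.intervalIntegrable (0:ℝ) Real.pi
  have hIB : IntervalIntegrable _ MeasureTheory.volume (0:ℝ) Real.pi :=
    hB.intervalIntegrable (0:ℝ) Real.pi
  have hsub : Gp p z - G z = ∫ θ in (0:ℝ)..Real.pi,
      (Complex.exp (2 * z * (Real.cos θ : ℂ)) *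
        (((1 + 1 / (p : ℝ)) * (1 - 2 * Real.cos (2 * θ) / p + 1 / (p : ℝ) ^ 2)⁻¹ *
          ((2 / Real.pi) * Real.sin θ ^ 2) : ℝ) : ℂ)
      - Complex.exp (2 * z * (Real.cos θ : ℂ)) * (((2 / Real.pi) * Real.sin θ ^ 2 : ℝ) : ℂ)) :=
    (intervalIntegral.integral_sub hIA hIB).symm
  rw [hsub]
  have hnormexp : ∀ θ : ℝ, ‖Complex.exp (2 * z * (Real.cos θ : ℂ))‖
      = Real.exp (2 * u * Real.cos θ) := by
    intro θ
    rw [Complex.norm_exp]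
    have hre : (2 * z * (Real.cos θ : ℂ)).re = 2 * u * Real.cos θ := by
      simp only [hz, Complex.mul_re, Complex.mul_im, Complex.ofReal_re, Complex.ofReal_im,
        Complex.add_re, Complex.add_im, Complex.I_re, Complex.I_im, Complex.re_ofNat,
        Complex.im_ofNat]
      ring
    rw [hre]
  have hpi : (0:ℝ) ≤ Real.pi := Real.pi_pos.le
  have hbound : ∀ θ : ℝ,
      ‖Complex.exp (2 * z * (Real.cos θ : ℂ)) *
        (((1 + 1 / (p : ℝ)) * (1 - 2 * Real.cos (2 * θ) / p + 1 / (p : ℝ) ^ 2)⁻¹ *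
          ((2 / Real.pi) * Real.sin θ ^ 2) : ℝ) : ℂ)
      - Complex.exp (2 * z * (Real.cos θ : ℂ)) * (((2 / Real.pi) * Real.sin θ ^ 2 : ℝ) : ℂ)‖
      ≤ (16 / (p:ℝ)) * (Real.exp (2 * u * Real.cos θ) * ((2 / Real.pi) * Real.sin θ ^ 2)) := by
    intro θ
    rw [← mul_sub, ← Complex.ofReal_sub, norm_mul, hnormexp θ, Complex.norm_real,
      Real.norm_eq_abs]
    have hw : (0:ℝ) ≤ (2 / Real.pi) * Real.sin θ ^ 2 := by positivity
    have hdiff : (1 + 1 / (p:ℝ)) * (1 - 2 * Real.cos (2 * θ) / p + 1 / (p:ℝ) ^ 2)⁻¹ *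
        ((2 / Real.pi) * Real.sin θ ^ 2) - (2 / Real.pi) * Real.sin θ ^ 2
        = ((1 + 1 / (p:ℝ)) * (1 - 2 * Real.cos (2 * θ) / p + 1 / (p:ℝ) ^ 2)⁻¹ - 1) *
          ((2 / Real.pi) * Real.sin θ ^ 2) := by ring
    rw [hdiff, abs_mul, _root_.abs_of_nonneg hw]
    have step1 : |(1 + 1 / (p:ℝ)) * (1 - 2 * Real.cos (2 * θ) / p + 1 / (p:ℝ) ^ 2)⁻¹ - 1| *
        ((2 / Real.pi) * Real.sin θ ^ 2) ≤ (16 / (p:ℝ)) * ((2 / Real.pi) * Real.sin θ ^ 2) :=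
      mul_le_mul_of_nonneg_right (ratio_bound hp2 θ) hw
    calc Real.exp (2 * u * Real.cos θ) *
          (|(1 + 1 / (p:ℝ)) * (1 - 2 * Real.cos (2 * θ) / p + 1 / (p:ℝ) ^ 2)⁻¹ - 1| *
            ((2 / Real.pi) * Real.sin θ ^ 2))
        ≤ Real.exp (2 * u * Real.cos θ) * ((16 / (p:ℝ)) * ((2 / Real.pi) * Real.sin θ ^ 2)) :=
          mul_le_mul_of_nonneg_left step1 (Real.exp_pos _).le
      _ = (16 / (p:ℝ)) * (Real.exp (2 * u * Real.cos θ) * ((2 / Real.pi) * Real.sin θ ^ 2)) := by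
          ring
  have hgcont : Continuous fun θ : ℝ =>
      (16 / (p:ℝ)) * (Real.exp (2 * u * Real.cos θ) * ((2 / Real.pi) * Real.sin θ ^ 2)) :=
    continuous_const.mul ((Real.continuous_exp.comp
      (continuous_const.mul Real.continuous_cos)).mul hwcont)
  have h1 := intervalIntegral.norm_integral_le_abs_of_norm_le
    (a := (0:ℝ)) (b := Real.pi) (μ := MeasureTheory.volume)
    (f := fun θ : ℝ => Complex.exp (2 * z * (Real.cos θ : ℂ)) *
        (((1 + 1 / (p : ℝ)) * (1 - 2 * Real.cos (2 * θ) / p + 1 / (p : ℝ) ^ 2)⁻¹ *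
          ((2 / Real.pi) * Real.sin θ ^ 2) : ℝ) : ℂ)
      - Complex.exp (2 * z * (Real.cos θ : ℂ)) * (((2 / Real.pi) * Real.sin θ ^ 2 : ℝ) : ℂ))
    (g := fun θ : ℝ =>
      (16 / (p:ℝ)) * (Real.exp (2 * u * Real.cos θ) * ((2 / Real.pi) * Real.sin θ ^ 2)))
    (Filter.Eventually.of_forall hbound) (hgcont.intervalIntegrable 0 Real.pi)
  refine h1.trans ?_
  rw [_root_.abs_of_nonneg (intervalIntegral.integral_nonneg hpi (fun θ _ => by positivity))]
  rw [intervalIntegral.integral_const_mul]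
  rw [show Greal u = ∫ θ in (0:ℝ)..Real.pi,
    Real.exp (2 * u * Real.cos θ) * ((2 / Real.pi) * Real.sin θ ^ 2) from rfl]
  rw [div_eq_mul_inv]
end
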